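/- With R1, R2, Θ independent, R1 ~ μ_{λ1,c1}, R2 ~ μ_{λ2,c2}, Θ uniform on (0, π), and ρ = √(R1² + R2² − 2·R1·R2·cos Θ), the joint probability P(ρ < r, R1 = c1·t, R2 < c2·t) equals 0 for 0 < r ≤ (c1 − c2)·t, and equals (λ2·e^{−(λ1+λ2)t}/(π·c2)) · ∫_{c1t−r}^{c2t} arccos((ξ² + (c1t)² − r²)/(2·c1t·ξ)) · ξ·(c2²t² − ξ²)^{−1/2} · exp((λ2/c2)·√(c2²t² − ξ²)) dξ for (c1 − c2)·t < r ≤ c1·t. -/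

import Mathlib

open MeasureTheory ProbabilityTheory

/-- Density of the absolutely continuous part of the law of the distance from
the origin of a planar Markov random flight with speed `c` and rate `lam` at time `t`. -/
noncomputable def fac (t lam c z : ℝ) : ℝ :=
  if 0 < z ∧ z < c * t then
    (lam / c) * z / Real.sqrt (c ^ 2 * t ^ 2 - z ^ 2) *
      Real.exp (-(lam * t) + (lam / c) * Real.sqrt (c ^ 2 * t ^ 2 - z ^ 2))
  else 0

/-- The law of the distance from the origin of a planar Markov random flight:
singular part `e^{-λt}·δ_{ct}` plus absolutely continuous part with density `fac`. -/
noncomputable def flightLaw (t lam c : ℝ) : Measure ℝ :=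
  ENNReal.ofReal (Real.exp (-(lam * t))) • Measure.dirac (c * t) +
    volume.withDensity fun z => ENNReal.ofReal (fac t lam c z)

/-- The uniform probability measure on a set `s ⊆ ℝ`. -/
noncomputable def uniformMeasure (s : Set ℝ) : Measure ℝ :=
  (volume s)⁻¹ • volume.restrict s

/-- The Euclidean distance between the two flights, expressed through the radii
`R1, R2` and the angle `Θ` via the law of cosines. -/
noncomputable def rho {Ω : Type*} (R1 R2 Θ : Ω → ℝ) (ω : Ω) : ℝ :=
  Real.sqrt (R1 ω ^ 2 + R2 ω ^ 2 - 2 * R1 ω * R2 ω * Real.cos (Θ ω))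

instance flightLaw.instSFinite (t lam c : ℝ) : SFinite (flightLaw t lam c) := by
  unfold flightLaw; infer_instance

instance uniformMeasure.instSFinite (s : Set ℝ) : SFinite (uniformMeasure s) := by
  unfold uniformMeasure; infer_instance

lemma fac_nonneg (t lam c z : ℝ) (hl : 0 ≤ lam) (hc : 0 ≤ c) : 0 ≤ fac t lam c z := by
  rw [fac]
  split_ifs with h
  · have := h.1
    positivity
  · exact le_rfl

lemma fac_measurable (t lam c : ℝ) : Measurable (fac t lam c) := by
  unfold fac
  apply Measurable.ite
  · exact (measurableSet_lt measurable_const measurable_id).inter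
      (measurableSet_lt measurable_id measurable_const)
  · fun_prop
  · fun_prop

lemma phi_integrable (c2 t : ℝ) (hc2 : 0 < c2) (ht : 0 < t) :
    IntegrableOn (fun y => y / Real.sqrt (c2^2*t^2 - y^2)) (Set.Ioo 0 (c2*t)) volume := by
  have hb : 0 < c2 * t := mul_pos hc2 ht
  have hcont : ContinuousOn (fun y : ℝ => -Real.sqrt (c2^2*t^2 - y^2)) (Set.Icc 0 (c2*t)) :=
    ((Real.continuous_sqrt.comp (by continuity)).neg).continuousOn
  have hderiv : ∀ x ∈ Set.Ioo 0 (c2*t),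
      HasDerivAt (fun y : ℝ => -Real.sqrt (c2^2*t^2 - y^2)) (x / Real.sqrt (c2^2*t^2 - x^2)) x := by
    intro x hx
    have hD : 0 < c2^2*t^2 - x^2 := by nlinarith [hx.1, hx.2]
    have h1 : HasDerivAt (fun y : ℝ => c2^2*t^2 - y^2) (-(2*x)) x := by
      simpa using (hasDerivAt_pow 2 x).const_sub (c2^2*t^2)
    have h2 := (Real.hasDerivAt_sqrt hD.ne').comp x h1
    have h3 := h2.neg
    refine h3.congr_deriv ?_
    have hs : Real.sqrt (c2^2*t^2 - x^2) ≠ 0 := (Real.sqrt_pos.2 hD).ne'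
    ring
  have := intervalIntegral.integrableOn_deriv_of_nonneg hcont hderiv
    (fun x hx => div_nonneg hx.1.le (Real.sqrt_nonneg _))
  exact this.mono_set Set.Ioo_subset_Ioc_self

lemma angle_iff (v θ : ℝ) (hθ : θ ∈ Set.Ioo 0 Real.pi) :
    v < Real.cos θ ↔ θ < Real.arccos v := by
  rcases lt_or_ge v (-1) with hv | hv
  · constructor
    · intro _; rw [Real.arccos_eq_pi.2 hv.le]; exact hθ.2
    · intro _; exact hv.trans_le (Real.neg_one_le_cos θ)
  rcases le_or_gt v 1 with hv1 | hv1
  · have h1 : Real.cos (Real.arccos v) = v := Real.cos_arccos hv hv1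
    have hmem : Real.arccos v ∈ Set.Icc 0 Real.pi := ⟨Real.arccos_nonneg v, Real.arccos_le_pi v⟩
    have hmem' : θ ∈ Set.Icc 0 Real.pi := ⟨hθ.1.le, hθ.2.le⟩
    conv_lhs => rw [← h1]
    exact Real.strictAntiOn_cos.lt_iff_gt hmem hmem'
  · constructor
    · intro h
      exact absurd (h.trans_le (Real.cos_le_one θ)) (not_lt.2 hv1.le)
    · intro h
      rw [Real.arccos_eq_zero.2 hv1.le] at h
      exact absurd h (not_lt.2 hθ.1.le)

lemma angle_vol (v : ℝ) :
    volume ({θ : ℝ | v < Real.cos θ} ∩ Set.Ioo 0 Real.pi) = ENNReal.ofReal (Real.arccos v) := by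
  have : {θ : ℝ | v < Real.cos θ} ∩ Set.Ioo 0 Real.pi = Set.Ioo 0 (Real.arccos v) := by
    ext θ
    constructor
    · rintro ⟨h1, h2⟩
      exact ⟨h2.1, (angle_iff v θ h2).1 h1⟩
    · rintro ⟨h1, h2⟩
      have hθπ : θ < Real.pi := h2.trans_le (Real.arccos_le_pi v)
      exact ⟨(angle_iff v θ ⟨h1, hθπ⟩).2 h2, h1, hθπ⟩
  rw [this, Real.volume_Ioo, sub_zero]

lemma keyProd (t l1 l2 c1 c2 r : ℝ) (ht : 0 < t) (hc2 : 0 < c2) (hc12 : c2 ≤ c1) (hr : 0 < r) :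
    (flightLaw t l1 c1).prod ((flightLaw t l2 c2).prod (uniformMeasure (Set.Ioo 0 Real.pi)))
      {p : ℝ × ℝ × ℝ | Real.sqrt (p.1^2 + p.2.1^2 - 2*p.1*p.2.1*Real.cos p.2.2) < r
        ∧ p.1 = c1*t ∧ p.2.1 < c2*t}
    = ENNReal.ofReal (Real.exp (-(l1*t))) *
        ∫⁻ y in Set.Ioo 0 (c2*t), ENNReal.ofReal (fac t l2 c2 y) *
          ((ENNReal.ofReal Real.pi)⁻¹ *
            ENNReal.ofReal (Real.arccos ((y^2 + (c1*t)^2 - r^2) / (2*(c1*t)*y)))) := by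
  have ha : 0 < c1 * t := mul_pos (hc2.trans_le hc12) ht
  set μ2 := flightLaw t l2 c2
  set μΘ := uniformMeasure (Set.Ioo 0 Real.pi)
  set ν := μ2.prod μΘ
  set S : Set (ℝ × ℝ × ℝ) := {p : ℝ × ℝ × ℝ |
      Real.sqrt (p.1^2 + p.2.1^2 - 2*p.1*p.2.1*Real.cos p.2.2) < r
        ∧ p.1 = c1*t ∧ p.2.1 < c2*t} with hSdef
  have hSm : MeasurableSet S := by
    have h1 : Measurable fun p : ℝ × ℝ × ℝ =>
        Real.sqrt (p.1^2 + p.2.1^2 - 2*p.1*p.2.1*Real.cos p.2.2) := by fun_prop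
    exact (measurableSet_lt h1 measurable_const).inter
      ((measurableSet_eq_fun measurable_fst measurable_const).inter
        (measurableSet_lt (measurable_snd.fst) measurable_const))
  rw [Measure.prod_apply hSm]
  have hg : Measurable fun x => ν (Prod.mk x ⁻¹' S) := measurable_measure_prodMk_left hSm
  have hzero : ∀ x, x ≠ c1 * t → ν (Prod.mk x ⁻¹' S) = 0 := by
    intro x hx
    have : Prod.mk x ⁻¹' S = ∅ := by
      ext q; simp [hSdef, hx]
    simp [this]
  have hwd0 : ∫⁻ x, ν (Prod.mk x ⁻¹' S)
      ∂(volume.withDensity fun z => ENNReal.ofReal (fac t l1 c1 z)) = 0 := by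
    have h0 : ∀ᵐ x ∂volume, ν (Prod.mk x ⁻¹' S) = 0 := by
      have hne : ∀ᵐ x ∂(volume : Measure ℝ), x ≠ c1 * t := by
        rw [ae_iff]
        simpa using Real.volume_singleton (a := c1 * t)
      filter_upwards [hne] with x hx using hzero x hx
    have h0' : ∀ᵐ x ∂(volume.withDensity fun z => ENNReal.ofReal (fac t l1 c1 z)),
        ν (Prod.mk x ⁻¹' S) = 0 :=
      (withDensity_absolutelyContinuous volume _).ae_le h0
    rw [lintegral_congr_ae h0', lintegral_zero]
  have step1 : ∫⁻ x, ν (Prod.mk x ⁻¹' S) ∂(flightLaw t l1 c1)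
      = ENNReal.ofReal (Real.exp (-(l1*t))) * ν (Prod.mk (c1*t) ⁻¹' S) := by
    rw [flightLaw, lintegral_add_measure, lintegral_smul_measure, lintegral_dirac' _ hg, hwd0,
      add_zero, smul_eq_mul]
  rw [step1]
  congr 1
  have hsec : Prod.mk (c1*t) ⁻¹' S = {q : ℝ × ℝ |
      Real.sqrt ((c1*t)^2 + q.1^2 - 2*(c1*t)*q.1*Real.cos q.2) < r ∧ q.1 < c2*t} := by
    ext q; simp [hSdef]
  rw [hsec]
  set S1 : Set (ℝ × ℝ) := {q : ℝ × ℝ |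
      Real.sqrt ((c1*t)^2 + q.1^2 - 2*(c1*t)*q.1*Real.cos q.2) < r ∧ q.1 < c2*t} with hS1def
  have hS1m : MeasurableSet S1 := by
    have h1 : Measurable fun q : ℝ × ℝ =>
        Real.sqrt ((c1*t)^2 + q.1^2 - 2*(c1*t)*q.1*Real.cos q.2) := by fun_prop
    exact (measurableSet_lt h1 measurable_const).inter
      (measurableSet_lt measurable_fst measurable_const)
  rw [show ν S1 = ∫⁻ y, μΘ (Prod.mk y ⁻¹' S1) ∂μ2 from Measure.prod_apply hS1m]
  have hh : Measurable fun y => μΘ (Prod.mk y ⁻¹' S1) := measurable_measure_prodMk_left hS1m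
  have hf2 : Measurable fun z => ENNReal.ofReal (fac t l2 c2 z) :=
    (fac_measurable t l2 c2).ennreal_ofReal
  have hdirac : μΘ (Prod.mk (c2*t) ⁻¹' S1) = 0 := by
    have : Prod.mk (c2*t) ⁻¹' S1 = ∅ := by ext θ; simp [hS1def]
    simp [this]
  have step2 : ∫⁻ y, μΘ (Prod.mk y ⁻¹' S1) ∂μ2
      = ∫⁻ y, ENNReal.ofReal (fac t l2 c2 y) * μΘ (Prod.mk y ⁻¹' S1) ∂volume := by
    rw [show μ2 = flightLaw t l2 c2 from rfl, flightLaw, lintegral_add_measure,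
      lintegral_smul_measure, lintegral_dirac' _ hh, hdirac, smul_zero, zero_add,
      lintegral_withDensity_eq_lintegral_mul volume hf2 hh]
    rfl
  rw [step2]
  have hind : ∀ y, ENNReal.ofReal (fac t l2 c2 y) * μΘ (Prod.mk y ⁻¹' S1)
      = (Set.Ioo 0 (c2*t)).indicator
          (fun y => ENNReal.ofReal (fac t l2 c2 y) * μΘ (Prod.mk y ⁻¹' S1)) y := by
    intro y
    by_cases hy : y ∈ Set.Ioo 0 (c2*t)
    · rw [Set.indicator_of_mem hy]
    · rw [Set.indicator_of_notMem hy]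
      have : fac t l2 c2 y = 0 := by
        rw [fac, if_neg]
        simpa [Set.mem_Ioo] using hy
      simp [this]
  rw [lintegral_congr hind, lintegral_indicator measurableSet_Ioo _]
  apply setLIntegral_congr_fun measurableSet_Ioo
  intro y hy
  dsimp only
  have hy0 : 0 < y := hy.1
  have h2ay : 0 < 2 * (c1*t) * y := by positivity
  congr 1
  have hAset : Prod.mk y ⁻¹' S1
      = {θ : ℝ | (y^2 + (c1*t)^2 - r^2) / (2*(c1*t)*y) < Real.cos θ} := by
    ext θ
    simp only [hS1def, Set.mem_preimage, Set.mem_setOf_eq, hy.2, and_true]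
    rw [Real.sqrt_lt' hr, div_lt_iff₀ h2ay]
    constructor <;> intro h <;> nlinarith
  rw [hAset]
  have hAm : MeasurableSet {θ : ℝ | (y^2 + (c1*t)^2 - r^2) / (2*(c1*t)*y) < Real.cos θ} :=
    measurableSet_lt measurable_const (by fun_prop)
  rw [show μΘ = uniformMeasure (Set.Ioo 0 Real.pi) from rfl, uniformMeasure,
    Measure.smul_apply, Measure.restrict_apply hAm, angle_vol, Real.volume_Ioo, sub_zero,
    smul_eq_mul]

theorem joint_prob_second_switched_small_r {Ω : Type*} [MeasureSpace Ω] [IsProbabilityMeasure (ℙ : Measure Ω)]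
    (t l1 l2 c1 c2 : ℝ) (ht : 0 < t) (hl1 : 0 < l1) (hl2 : 0 < l2)
    (hc2 : 0 < c2) (hc12 : c2 ≤ c1)
    (R1 R2 Θ : Ω → ℝ) (hmR1 : Measurable R1) (hmR2 : Measurable R2) (hmΘ : Measurable Θ)
    (hind : iIndepFun ![R1, R2, Θ] ℙ)
    (hR1 : Measure.map R1 ℙ = flightLaw t l1 c1)
    (hR2 : Measure.map R2 ℙ = flightLaw t l2 c2)
    (hΘ : Measure.map Θ ℙ = uniformMeasure (Set.Ioo 0 Real.pi))
    (r : ℝ) :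
    (0 < r → r ≤ (c1 - c2) * t →
      ℙ {ω | rho R1 R2 Θ ω < r ∧ R1 ω = c1 * t ∧ R2 ω < c2 * t} = 0) ∧
    ((c1 - c2) * t < r → r ≤ c1 * t →
      ℙ {ω | rho R1 R2 Θ ω < r ∧ R1 ω = c1 * t ∧ R2 ω < c2 * t}
        = ENNReal.ofReal (l2 * Real.exp (-((l1 + l2) * t)) / (Real.pi * c2) *
            (∫ ξ in (c1 * t - r)..(c2 * t),
              Real.arccos ((ξ ^ 2 + (c1 * t) ^ 2 - r ^ 2) / (2 * (c1 * t) * ξ)) *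
                (ξ / Real.sqrt (c2 ^ 2 * t ^ 2 - ξ ^ 2)) *
                Real.exp ((l2 / c2) * Real.sqrt (c2 ^ 2 * t ^ 2 - ξ ^ 2))))) := by
  have ha : 0 < c1 * t := mul_pos (hc2.trans_le hc12) ht
  set S : Set (ℝ × ℝ × ℝ) := {p : ℝ × ℝ × ℝ |
      Real.sqrt (p.1^2 + p.2.1^2 - 2*p.1*p.2.1*Real.cos p.2.2) < r
        ∧ p.1 = c1*t ∧ p.2.1 < c2*t} with hSdef
  have hSm : MeasurableSet S := by
    have h1 : Measurable fun p : ℝ × ℝ × ℝ =>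
        Real.sqrt (p.1^2 + p.2.1^2 - 2*p.1*p.2.1*Real.cos p.2.2) := by fun_prop
    exact (measurableSet_lt h1 measurable_const).inter
      ((measurableSet_eq_fun measurable_fst measurable_const).inter
        (measurableSet_lt (measurable_snd.fst) measurable_const))
  -- joint law
  have hmapT : Measure.map (fun ω => (R1 ω, (R2 ω, Θ ω))) ℙ
      = (flightLaw t l1 c1).prod ((flightLaw t l2 c2).prod (uniformMeasure (Set.Ioo 0 Real.pi))) := by
    have hmeas : ∀ i, Measurable (![R1, R2, Θ] i) := by
      intro i; fin_cases i <;> simpa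
    have h23 : IndepFun R2 Θ ℙ := by
      have := hind.indepFun (show (1 : Fin 3) ≠ 2 by decide)
      simpa using this
    have h123 : IndepFun R1 (fun ω => (R2 ω, Θ ω)) ℙ := by
      have := (hind.indepFun_prodMk hmeas 1 2 0 (by decide) (by decide)).symm
      simpa using this
    have e1 : Measure.map (fun ω => (R2 ω, Θ ω)) ℙ = (Measure.map R2 ℙ).prod (Measure.map Θ ℙ) :=
      (indepFun_iff_map_prod_eq_prod_map_map hmR2.aemeasurable hmΘ.aemeasurable).mp h23
    have e2 : Measure.map (fun ω => (R1 ω, (R2 ω, Θ ω))) ℙ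
        = (Measure.map R1 ℙ).prod (Measure.map (fun ω => (R2 ω, Θ ω)) ℙ) :=
      (indepFun_iff_map_prod_eq_prod_map_map hmR1.aemeasurable
        (hmR2.prodMk hmΘ).aemeasurable).mp h123
    rw [e2, e1, hR1, hR2, hΘ]
  have hP : ℙ {ω | rho R1 R2 Θ ω < r ∧ R1 ω = c1 * t ∧ R2 ω < c2 * t}
      = (flightLaw t l1 c1).prod
          ((flightLaw t l2 c2).prod (uniformMeasure (Set.Ioo 0 Real.pi))) S := by
    rw [← hmapT, Measure.map_apply (hmR1.prodMk (hmR2.prodMk hmΘ)) hSm]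
    rfl
  constructor
  · -- small r case
    intro hr hrle
    rw [hP, keyProd t l1 l2 c1 c2 r ht hc2 hc12 hr]
    have hz : ∫⁻ y in Set.Ioo 0 (c2*t), ENNReal.ofReal (fac t l2 c2 y) *
          ((ENNReal.ofReal Real.pi)⁻¹ *
            ENNReal.ofReal (Real.arccos ((y^2 + (c1*t)^2 - r^2) / (2*(c1*t)*y)))) = 0 := by
      rw [setLIntegral_congr_fun measurableSet_Ioo (fun y hy => ?_),
        lintegral_zero]
      have hy0 : 0 < y := hy.1
      have harc : Real.arccos ((y^2 + (c1*t)^2 - r^2) / (2*(c1*t)*y)) = 0 := by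
        apply Real.arccos_eq_zero.2
        rw [le_div_iff₀ (mul_pos (mul_pos two_pos ha) hy0)]
        have hry : r ≤ c1*t - y := by nlinarith [hy.2]
        nlinarith [pow_le_pow_left₀ hr.le hry 2]
      rw [harc]
      simp
    rw [hz, mul_zero]
  · -- main case
    intro hr1 hr2
    have hr : 0 < r := by
      have h0 : (0:ℝ) ≤ (c1-c2)*t := by nlinarith
      linarith
    have harle : 0 ≤ c1*t - r := by linarith
    have harlt : c1*t - r < c2*t := by nlinarith
    rw [hP, keyProd t l1 l2 c1 c2 r ht hc2 hc12 hr]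
    set G : ℝ → ℝ := fun y => fac t l2 c2 y *
        (Real.arccos ((y^2 + (c1*t)^2 - r^2) / (2*(c1*t)*y)) / Real.pi) with hGdef
    have hGnn : ∀ y, 0 ≤ G y := fun y =>
      mul_nonneg (fac_nonneg t l2 c2 y hl2.le hc2.le)
        (div_nonneg (Real.arccos_nonneg _) Real.pi_pos.le)
    have hFG : ∀ y, ENNReal.ofReal (fac t l2 c2 y) *
        ((ENNReal.ofReal Real.pi)⁻¹ *
          ENNReal.ofReal (Real.arccos ((y^2 + (c1*t)^2 - r^2) / (2*(c1*t)*y))))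
        = ENNReal.ofReal (G y) := by
      intro y
      rw [hGdef, ENNReal.ofReal_mul (fac_nonneg t l2 c2 y hl2.le hc2.le),
        ENNReal.ofReal_div_of_pos Real.pi_pos, ENNReal.div_eq_inv_mul]
    -- shift the interval of integration
    have hshift : ∫⁻ y in Set.Ioo 0 (c2*t), ENNReal.ofReal (G y)
        = ∫⁻ y in Set.Ioo (c1*t - r) (c2*t), ENNReal.ofReal (G y) := by
      rw [← lintegral_indicator measurableSet_Ioo _, ← lintegral_indicator measurableSet_Ioo _]
      congr 1
      funext y
      by_cases h1 : y ∈ Set.Ioo (c1*t - r) (c2*t)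
      · rw [Set.indicator_of_mem h1, Set.indicator_of_mem (show y ∈ Set.Ioo 0 (c2*t) from ⟨lt_of_le_of_lt harle h1.1, h1.2⟩)]
      · rw [Set.indicator_of_notMem h1]
        by_cases h2 : y ∈ Set.Ioo 0 (c2*t)
        · rw [Set.indicator_of_mem h2]
          have hyle : y ≤ c1*t - r := by
            by_contra hcon
            push_neg at hcon
            exact h1 ⟨hcon, h2.2⟩
          have harc : Real.arccos ((y^2 + (c1*t)^2 - r^2) / (2*(c1*t)*y)) = 0 := by
            apply Real.arccos_eq_zero.2
            rw [le_div_iff₀ (mul_pos (mul_pos two_pos ha) h2.1)]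
            have hry : r ≤ c1*t - y := by linarith
            nlinarith [pow_le_pow_left₀ hr.le hry 2]
          rw [hGdef]
          simp [harc]
        · rw [Set.indicator_of_notMem h2]
    -- integrability
    have hvm : Measurable fun y : ℝ => (y^2 + (c1*t)^2 - r^2) / (2*(c1*t)*y) := by fun_prop
    have hGm : Measurable G :=
      (fac_measurable t l2 c2).mul
        ((Real.continuous_arccos.measurable.comp hvm).div_const Real.pi)
    have hGbig : IntegrableOn G (Set.Ioo 0 (c2*t)) volume := by
      apply Integrable.mono' ((phi_integrable c2 t hc2 ht).const_mul (l2/c2))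
        hGm.aestronglyMeasurable
      refine (ae_restrict_iff' measurableSet_Ioo).2 (ae_of_all _ fun y hy => ?_)
      have hy0 : 0 < y := hy.1
      have hD : 0 ≤ c2^2*t^2 - y^2 := by nlinarith [hy.2]
      have hsqle : Real.sqrt (c2^2*t^2 - y^2) ≤ c2*t := by
        rw [show c2*t = Real.sqrt ((c2*t)^2) from (Real.sqrt_sq (by positivity)).symm]
        exact Real.sqrt_le_sqrt (by nlinarith)
      have hexp : Real.exp (-(l2*t) + (l2/c2)*Real.sqrt (c2^2*t^2 - y^2)) ≤ 1 := by
        apply Real.exp_le_one_iff.2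
        have h1 : (l2/c2)*Real.sqrt (c2^2*t^2 - y^2) ≤ (l2/c2)*(c2*t) :=
          mul_le_mul_of_nonneg_left hsqle (le_of_lt (div_pos hl2 hc2))
        have h2 : (l2/c2)*(c2*t) = l2*t := by field_simp
        linarith
      have harc01 : Real.arccos ((y^2 + (c1*t)^2 - r^2) / (2*(c1*t)*y)) / Real.pi ≤ 1 :=
        (div_le_one Real.pi_pos).2 (Real.arccos_le_pi _)
      rw [Real.norm_eq_abs, abs_of_nonneg (hGnn y)]
      have h3 : G y ≤ fac t l2 c2 y := by
        calc G y ≤ fac t l2 c2 y * 1 :=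
              mul_le_mul_of_nonneg_left harc01 (fac_nonneg t l2 c2 y hl2.le hc2.le)
          _ = fac t l2 c2 y := mul_one _
      have h4 : fac t l2 c2 y ≤ l2/c2 * (y / Real.sqrt (c2^2*t^2 - y^2)) := by
        rw [fac, if_pos ⟨hy.1, hy.2⟩]
        calc (l2 / c2) * y / Real.sqrt (c2^2*t^2 - y^2) *
              Real.exp (-(l2 * t) + (l2 / c2) * Real.sqrt (c2^2*t^2 - y^2))
            ≤ (l2 / c2) * y / Real.sqrt (c2^2*t^2 - y^2) * 1 := by
              apply mul_le_mul_of_nonneg_left hexp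
              positivity
          _ = l2/c2 * (y / Real.sqrt (c2^2*t^2 - y^2)) := by
              rw [mul_one, mul_div_assoc]
      exact h3.trans h4
    have hGint : IntegrableOn G (Set.Ioo (c1*t - r) (c2*t)) volume :=
      hGbig.mono_set (fun y hy => ⟨lt_of_le_of_lt harle hy.1, hy.2⟩)
    rw [lintegral_congr hFG, hshift,
      ← ofReal_integral_eq_lintegral_ofReal hGint (ae_of_all _ hGnn),
      ← ENNReal.ofReal_mul (Real.exp_nonneg _)]
    congr 1
    -- real computation
    rw [intervalIntegral.integral_of_le (le_of_lt harlt), integral_Ioc_eq_integral_Ioo]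
    have hcongr : ∫ y in Set.Ioo (c1*t - r) (c2*t), G y
        = ∫ y in Set.Ioo (c1*t - r) (c2*t), (l2 * Real.exp (-(l2*t)) / (Real.pi * c2)) *
            (Real.arccos ((y ^ 2 + (c1 * t) ^ 2 - r ^ 2) / (2 * (c1 * t) * y)) *
              (y / Real.sqrt (c2 ^ 2 * t ^ 2 - y ^ 2)) *
              Real.exp ((l2 / c2) * Real.sqrt (c2 ^ 2 * t ^ 2 - y ^ 2))) := by
      apply setIntegral_congr_fun measurableSet_Ioo
      intro y hy
      have hy0 : 0 < y := lt_of_le_of_lt harle hy.1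
      rw [hGdef]
      simp only
      rw [fac, if_pos ⟨hy0, hy.2⟩, Real.exp_add]
      ring
    rw [hcongr, MeasureTheory.integral_const_mul]
    rw [show -((l1+l2)*t) = -(l1*t) + -(l2*t) by ring, Real.exp_add]
    ring
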